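/- Let $R = \mathbb{C}[[z]]$ and let $P \in \mathrm{Mat}_n(\mathbb{C}[z])$ be lower triangular with monic diagonal entries $p_j$ of degree $d_j$ all of whose roots are $0$ (i.e. $p_j = z^{d_j}$), and strictly-lower entries of degree $\le d_j - 1$ in row $j$. Then the $\mathbb{C}$-vector space of polar tails $T := \{\text{principal part at } z=0 \text{ of } \mathbf{v}^t P^{-1} : \mathbf{v} \in \mathbb{C}[z]^n\}$ (row vectors of finite-tailed Laurent series with no nonnegative powers) has dimension exactly $\sum_{j=1}^n d_j = \deg \det P$, and is spanned by the principal parts of $z^k \mathbf{e}_j^t P^{-1}$ for $0 \le k \le d_j - 1$, $1 \le j \le n$. -/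

import Mathlib

open Polynomial

/-- The principal part of a formal Laurent series: keep only the coefficients
of strictly negative powers of `z`. -/
noncomputable def principalPart (f : LaurentSeries ℂ) : LaurentSeries ℂ where
  coeff n := if n < 0 then f.coeff n else 0
  isPWO_support' := by
    refine f.isPWO_support'.mono ?_
    intro n hn
    by_cases hneg : n < 0
    · simpa [Function.mem_support, hneg] using hn
    · simp [Function.mem_support, hneg] at hn

/-- The natural ring homomorphism `ℂ[z] →+* ℂ((z))`. -/
noncomputable def polyToLaurent' : ℂ[X] →+* LaurentSeries ℂ :=
  (HahnSeries.ofPowerSeries ℤ ℂ).comp Polynomial.coeToPowerSeries.ringHom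

lemma pp_coeff (f : LaurentSeries ℂ) (m : ℤ) :
    (principalPart f).coeff m = if m < 0 then f.coeff m else 0 := rfl

lemma pp_add (f g : LaurentSeries ℂ) :
    principalPart (f + g) = principalPart f + principalPart g := by
  ext m; simp only [pp_coeff, HahnSeries.coeff_add]; split_ifs <;> simp

lemma pp_smul (c : ℂ) (f : LaurentSeries ℂ) :
    principalPart (c • f) = c • principalPart f := by
  ext m; simp only [pp_coeff, HahnSeries.coeff_smul]; split_ifs <;> simp

lemma pp_zero : principalPart 0 = 0 := by
  ext m; simp [pp_coeff]

lemma pp_sum {α : Type*} (s : Finset α) (f : α → LaurentSeries ℂ) :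
    principalPart (∑ a ∈ s, f a) = ∑ a ∈ s, principalPart (f a) := by
  classical
  induction s using Finset.induction_on with
  | empty => simp [pp_zero]
  | insert _ _ h ih => simp [Finset.sum_insert h, pp_add, ih]

lemma pp_single (m : ℤ) (c : ℂ) :
    principalPart (HahnSeries.single m c) = if m < 0 then HahnSeries.single m c else 0 := by
  ext k
  rw [pp_coeff]
  by_cases h : m < 0
  · rw [if_pos h]
    by_cases hk : k < 0
    · rw [if_pos hk]
    · rw [if_neg hk, HahnSeries.coeff_single, if_neg (by omega)]
  · rw [if_neg h, HahnSeries.coeff_zero]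
    by_cases hk : k < 0
    · rw [if_pos hk, HahnSeries.coeff_single, if_neg (by omega)]
    · rw [if_neg hk]

lemma pp_single_neg {m : ℤ} (hm : m < 0) (c : ℂ) :
    principalPart (HahnSeries.single m c) = HahnSeries.single m c := by
  rw [pp_single, if_pos hm]

lemma pp_single_nonneg {m : ℤ} (hm : ¬ m < 0) (c : ℂ) :
    principalPart (HahnSeries.single m c) = 0 := by
  rw [pp_single, if_neg hm]

lemma polyToLaurent'_X_pow (k : ℕ) :
    polyToLaurent' (X ^ k) = HahnSeries.single (k : ℤ) 1 := by
  simp [polyToLaurent', map_pow, HahnSeries.ofPowerSeries_X, HahnSeries.single_pow]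

lemma polyToLaurent'_C (c : ℂ) :
    polyToLaurent' (C c) = HahnSeries.single (0 : ℤ) c := by
  simp [polyToLaurent', Polynomial.coe_C, HahnSeries.ofPowerSeries_C, HahnSeries.C_apply]

lemma hahn_sum_coeff {α : Type*} (s : Finset α) (f : α → LaurentSeries ℂ) (e : ℤ) :
    (∑ a ∈ s, f a).coeff e = ∑ a ∈ s, (f a).coeff e := by
  classical
  induction s using Finset.induction_on with
  | empty => simp
  | insert _ _ h ih => simp [Finset.sum_insert h, HahnSeries.coeff_add, ih]

lemma pp_sub (f g : LaurentSeries ℂ) :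
    principalPart (f - g) = principalPart f - principalPart g := by
  ext m; simp only [pp_coeff, HahnSeries.coeff_sub]; split_ifs <;> simp

lemma poly_decomp (p : ℂ[X]) (x : LaurentSeries ℂ) :
    principalPart (polyToLaurent' p * x)
      = ∑ m ∈ p.support, p.coeff m • principalPart (HahnSeries.single (m : ℤ) 1 * x) := by
  conv_lhs => rw [p.as_sum_support]
  rw [map_sum, Finset.sum_mul, pp_sum]
  refine Finset.sum_congr rfl fun m _ => ?_
  rw [← pp_smul]
  congr 1
  rw [← C_mul_X_pow_eq_monomial, map_mul, polyToLaurent'_X_pow, polyToLaurent'_C,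
    mul_assoc, HahnSeries.single_zero_mul_eq_smul]


/-- Localized Tyurin space: for `P` lower triangular with diagonal `z^{d_j}`
and strictly-lower entries of degree `< d_j` in row `j`, the space of
principal parts of `vᵗ P⁻¹` (for polynomial row vectors `v`) is spanned by the
principal parts of `z^k e_jᵗ P⁻¹` (`0 ≤ k ≤ d_j − 1`) and has dimension
exactly `∑ d_j = deg det P`. -/
theorem tyurin_space_dimension {n : ℕ} (P : Matrix (Fin n) (Fin n) ℂ[X])
    (d : Fin n → ℕ)
    (htri : ∀ i j : Fin n, i < j → P i j = 0)
    (hdiag : ∀ j : Fin n, P j j = X ^ d j)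
    (hlow : ∀ j k : Fin n, k < j → (P j k).degree < (d j : ℕ)) :
    {x : Fin n → LaurentSeries ℂ | ∃ v : Fin n → ℂ[X],
        x = fun i => principalPart
          (Matrix.vecMul (fun j => polyToLaurent' (v j)) (P.map polyToLaurent')⁻¹ i)}
      = ↑(Submodule.span ℂ (Set.range fun jk : (j : Fin n) × Fin (d j) =>
          fun i => principalPart
            (HahnSeries.single (jk.2.val : ℤ) (1 : ℂ)
              * (P.map polyToLaurent')⁻¹ jk.1 i))) ∧
    Module.finrank ℂ
        (Submodule.span ℂ (Set.range fun jk : (j : Fin n) × Fin (d j) =>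
          fun i => principalPart
            (HahnSeries.single (jk.2.val : ℤ) (1 : ℂ)
              * (P.map polyToLaurent')⁻¹ jk.1 i)))
      = ∑ j, d j := by
  classical
  set Q : Matrix (Fin n) (Fin n) (LaurentSeries ℂ) := P.map polyToLaurent' with hQdef
  set B : Matrix (Fin n) (Fin n) (LaurentSeries ℂ) := Q⁻¹ with hBdef
  have hQtri : Q.BlockTriangular OrderDual.toDual := by
    intro i j hij
    simp [hQdef, Matrix.map_apply, htri i j (OrderDual.toDual_lt_toDual.mp hij)]
  have hQdiag : ∀ j : Fin n, Q j j = HahnSeries.single (d j : ℤ) 1 := fun j => by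
    simp [hQdef, Matrix.map_apply, hdiag j, polyToLaurent'_X_pow]
  have hdet0 : Q.det ≠ 0 := by
    rw [Matrix.det_of_lowerTriangular Q hQtri]
    refine Finset.prod_ne_zero_iff.2 fun j _ => ?_
    rw [hQdiag j]
    exact HahnSeries.single_ne_zero one_ne_zero
  have hu : IsUnit Q.det := isUnit_iff_ne_zero.mpr hdet0
  haveI : Invertible Q := Q.invertibleOfIsUnitDet hu
  have hQB : Q * B = 1 := Matrix.mul_nonsing_inv Q hu
  have hBtri : ∀ i j : Fin n, i < j → B i j = 0 := fun i j hij =>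
    Matrix.blockTriangular_inv_of_blockTriangular hQtri
      (OrderDual.toDual_lt_toDual.mpr hij)
  have hBdiag : ∀ j : Fin n, B j j = HahnSeries.single (-(d j : ℤ)) 1 := by
    intro j
    have h1 : ∑ i, Q j i * B i j = 1 := by
      rw [← Matrix.mul_apply, hQB, Matrix.one_apply_eq]
    have h2 : ∑ i, Q j i * B i j = Q j j * B j j := by
      refine Finset.sum_eq_single j (fun i _ hij => ?_) (fun h => absurd (Finset.mem_univ j) h)
      rcases lt_or_gt_of_ne hij with h | h
      · rw [hBtri i j h, mul_zero]
      · rw [show Q j i = 0 from by simp [hQdef, Matrix.map_apply, htri j i h], zero_mul]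
    rw [h2, hQdiag j] at h1
    have h4 := congrArg (fun x => HahnSeries.single (-(d j : ℤ)) (1 : ℂ) * x) h1
    simp only [← mul_assoc, HahnSeries.single_mul_single, neg_add_cancel, one_mul, mul_one,
      HahnSeries.single_zero_one] at h4
    exact h4
  have hrow : ∀ j i : Fin n,
      HahnSeries.single (d j : ℤ) 1 * B j i
        = (1 : Matrix (Fin n) (Fin n) (LaurentSeries ℂ)) j i
          - ∑ l ∈ Finset.univ.filter (fun l => l < j), polyToLaurent' (P j l) * B l i := by
    intro j i
    have h1 : ∑ l, Q j l * B l i = (1 : Matrix (Fin n) (Fin n) (LaurentSeries ℂ)) j i := by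
      rw [← Matrix.mul_apply, hQB]
    rw [← Finset.sum_filter_add_sum_filter_not Finset.univ (fun l => l < j)] at h1
    have h2 : ∑ l ∈ Finset.univ.filter (fun l => ¬ l < j), Q j l * B l i
        = HahnSeries.single (d j : ℤ) 1 * B j i := by
      rw [Finset.sum_eq_single j (fun l hl hlj => ?_) (fun h => ?_)]
      · rw [hQdiag j]
      · have : ¬ l < j := (Finset.mem_filter.mp hl).2
        have hjl : j < l := lt_of_le_of_ne (not_lt.mp this) (Ne.symm hlj)
        rw [show Q j l = 0 from by simp [hQdef, Matrix.map_apply, htri j l hjl], zero_mul]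
      · exact absurd (Finset.mem_filter.mpr ⟨Finset.mem_univ j, lt_irrefl j⟩) h
    rw [h2] at h1
    have := eq_sub_of_add_eq' h1
    simpa [hQdef, Matrix.map_apply] using this
  -- the submodule of tails
  set w : ((j : Fin n) × Fin (d j)) → (Fin n → LaurentSeries ℂ) :=
    fun jk => fun i => principalPart
      (HahnSeries.single (jk.2.val : ℤ) (1 : ℂ) * B jk.1 i) with hwdef
  set T : Submodule ℂ (Fin n → LaurentSeries ℂ) := Submodule.span ℂ (Set.range w) with hTdef
  have polyPP : ∀ (l : Fin n) (p : ℂ[X]),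
      (∀ m : ℕ, (fun i => principalPart (HahnSeries.single (m : ℤ) 1 * B l i)) ∈ T) →
      (fun i => principalPart (polyToLaurent' p * B l i)) ∈ T := by
    intro l p hM
    have hfun : (fun i => principalPart (polyToLaurent' p * B l i))
        = ∑ m ∈ p.support, p.coeff m •
            (fun i => principalPart (HahnSeries.single (m : ℤ) 1 * B l i)) := by
      funext i
      rw [poly_decomp]
      simp [Finset.sum_apply]
    rw [hfun]
    exact Submodule.sum_mem _ fun m _ => Submodule.smul_mem _ _ (hM m)
  have claimA : ∀ (N : ℕ) (j : Fin n), j.val < N → ∀ k : ℕ,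
      (fun i => principalPart (HahnSeries.single (k : ℤ) 1 * B j i)) ∈ T := by
    intro N
    induction N with
    | zero => intro j h; omega
    | succ N IH =>
      intro j hj k
      by_cases hk : k < d j
      · exact Submodule.subset_span ⟨⟨j, ⟨k, hk⟩⟩, rfl⟩
      · push_neg at hk
        have hfun : (fun i => principalPart (HahnSeries.single (k : ℤ) 1 * B j i))
            = -∑ l ∈ Finset.univ.filter (fun l => l < j),
                (fun i => principalPart (polyToLaurent' (X ^ (k - d j) * P j l) * B l i)) := by
          funext i
          have e0 : ((k - d j : ℕ) : ℤ) + (d j : ℤ) = (k : ℤ) := by omega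
          have e1 : HahnSeries.single (k : ℤ) 1 * B j i
              = HahnSeries.single ((k - d j : ℕ) : ℤ) 1
                  * (HahnSeries.single (d j : ℤ) 1 * B j i) := by
            rw [← mul_assoc, HahnSeries.single_mul_single, one_mul, e0]
          have e2 : principalPart (HahnSeries.single ((k - d j : ℕ) : ℤ) 1
              * (1 : Matrix (Fin n) (Fin n) (LaurentSeries ℂ)) j i) = 0 := by
            by_cases hij : j = i
            · rw [hij, Matrix.one_apply_eq, mul_one,
                pp_single_nonneg (by omega)]
            · rw [Matrix.one_apply_ne hij, mul_zero, pp_zero]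
          simp only [Pi.neg_apply, Finset.sum_apply]
          rw [e1, hrow j i, mul_sub, Finset.mul_sum, pp_sub, pp_sum, e2, zero_sub]
          refine congrArg Neg.neg (Finset.sum_congr rfl fun l hl => ?_)
          congr 1
          rw [map_mul, polyToLaurent'_X_pow, mul_assoc]
        rw [hfun]
        refine Submodule.neg_mem _ (Submodule.sum_mem _ fun l hl => ?_)
        have h2 : l.val < j.val := (Finset.mem_filter.mp hl).2
        exact polyPP l _ fun m => IH l (by omega) m
  have hvm : ∀ (x : Fin n → LaurentSeries ℂ) (i : Fin n),
      Matrix.vecMul x B i = ∑ l, x l * B l i := by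
    intro x i
    simp [Matrix.vecMul, dotProduct]
  have hgen : ∀ σ : (j : Fin n) × Fin (d j), ∃ v : Fin n → ℂ[X],
      w σ = fun i => principalPart (Matrix.vecMul (fun j => polyToLaurent' (v j)) B i) := by
    rintro ⟨j, k⟩
    refine ⟨fun l => if l = j then X ^ (k : ℕ) else 0, ?_⟩
    funext i
    simp only [hwdef]
    rw [hvm]
    congr 1
    exact ((Finset.sum_eq_single j (fun l _ hlj => by simp [hlj])
      (fun h => absurd (Finset.mem_univ j) h)).trans
      (by simp [polyToLaurent'_X_pow])).symm
  let S' : Submodule ℂ (Fin n → LaurentSeries ℂ) :=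
    { carrier := {x | ∃ v : Fin n → ℂ[X],
        x = fun i => principalPart (Matrix.vecMul (fun j => polyToLaurent' (v j)) B i)}
      zero_mem' := ⟨0, by funext i; simp [hvm, pp_zero]⟩
      add_mem' := by
        rintro a b ⟨v, rfl⟩ ⟨u, rfl⟩
        exact ⟨v + u, by
          funext i
          simp [hvm, map_add, add_mul, Finset.sum_add_distrib, pp_add]⟩
      smul_mem' := by
        rintro c a ⟨v, rfl⟩
        refine ⟨fun l => C c * v l, ?_⟩
        funext i
        simp only [Pi.smul_apply, hvm, map_mul, polyToLaurent'_C]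
        rw [← pp_smul, ← HahnSeries.single_zero_mul_eq_smul, Finset.mul_sum]
        congr 1
        exact Finset.sum_congr rfl fun l _ => by rw [mul_assoc] }
  have hspanle : T ≤ S' := Submodule.span_le.mpr (by rintro x ⟨σ, rfl⟩; exact hgen σ)
  have hli : LinearIndependent ℂ w := by
    rw [Fintype.linearIndependent_iff]
    intro g hg
    have key : ∀ N : ℕ, ∀ σ : (j : Fin n) × Fin (d j), n - σ.1.val ≤ N → g σ = 0 := by
      intro N
      induction N with
      | zero =>
        rintro ⟨j, k⟩ h
        exact absurd h (by have := j.isLt; omega)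
      | succ N IH =>
        rintro ⟨j, k⟩ hσ
        by_cases hN : n - j.val ≤ N
        · exact IH ⟨j, k⟩ hN
        · have hgt : ∀ σ' : (j : Fin n) × Fin (d j), j < σ'.1 → g σ' = 0 := by
            intro σ' h
            refine IH σ' ?_
            have h1 := σ'.1.isLt
            have h2 : j.val < σ'.1.val := h
            have hσ2 : n - (j : ℕ) ≤ N + 1 := hσ
            omega
          have h0 := congrFun hg j
          rw [Finset.sum_apply] at h0
          have h2 := congrArg (fun f => f.coeff ((k : ℤ) + -(d j : ℤ))) h0
          simp only [Pi.zero_apply, HahnSeries.coeff_zero] at h2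
          rw [hahn_sum_coeff] at h2
          have h3 : ∀ σ' ∈ (Finset.univ : Finset ((j : Fin n) × Fin (d j))),
              σ' ≠ ⟨j, k⟩ → ((g σ' • w σ') j).coeff ((k : ℤ) + -(d j : ℤ)) = 0 := by
            rintro ⟨j', k'⟩ _ hne
            rcases lt_trichotomy j' j with h | h | h
            · have hz : w ⟨j', k'⟩ j = 0 := by
                simp only [hwdef]
                rw [hBtri j' j h, mul_zero, pp_zero]
              rw [Pi.smul_apply, hz, smul_zero, HahnSeries.coeff_zero]
            · subst h
              have hk' : k' ≠ k := by
                intro hkk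
                exact hne (by rw [hkk])
              have h5 : (k' : ℕ) ≠ (k : ℕ) := fun hc => hk' (Fin.val_injective hc)
              have hd : w ⟨j', k'⟩ j' = HahnSeries.single ((k' : ℤ) + -(d j' : ℤ)) 1 := by
                simp only [hwdef]
                rw [hBdiag j', HahnSeries.single_mul_single, mul_one,
                  pp_single_neg (by have := k'.isLt; omega)]
              rw [Pi.smul_apply, hd, HahnSeries.coeff_smul, HahnSeries.coeff_single,
                if_neg (by omega), smul_zero]
            · rw [Pi.smul_apply, hgt ⟨j', k'⟩ h]
              simp
          rw [Finset.sum_eq_single (⟨j, k⟩ : (j : Fin n) × Fin (d j)) h3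
            (fun h => absurd (Finset.mem_univ _) h)] at h2
          have h4 : w ⟨j, k⟩ j = HahnSeries.single ((k : ℤ) + -(d j : ℤ)) 1 := by
            simp only [hwdef]
            rw [hBdiag j, HahnSeries.single_mul_single, mul_one,
              pp_single_neg (by have := k.isLt; omega)]
          rw [Pi.smul_apply, h4, HahnSeries.coeff_smul, HahnSeries.coeff_single, if_pos rfl,
            smul_eq_mul, mul_one] at h2
          exact h2
    intro σ
    exact key n σ (by omega)
  constructor
  · apply Set.Subset.antisymm
    · rintro x ⟨v, rfl⟩
      rw [SetLike.mem_coe]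
      have hfun : (fun i => principalPart
            (Matrix.vecMul (fun j => polyToLaurent' (v j)) B i))
          = ∑ l : Fin n, (fun i => principalPart (polyToLaurent' (v l) * B l i)) := by
        funext i
        rw [hvm, pp_sum]
        simp [Finset.sum_apply]
      rw [hfun]
      exact Submodule.sum_mem _ fun l _ => polyPP l (v l) (fun m => claimA n l l.isLt m)
    · intro x hx
      exact hspanle hx
  · rw [hTdef, finrank_span_eq_card hli]
    simp
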